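/- Let W = (W_1,…,W_N) ∈ F_w(Ω) be such that for every compact set K ⊂ Ω there is a constant C_K ≥ 1 with C_K^{−1} r^{n−1} ≤ H^{n−1}(∂*(W) ∩ B(x,r)) ≤ C_K r^{n−1} for every x ∈ ∂*(W) ∩ K and every 0 < r ≤ 1, where ∂*(W) = ∪_{i=1}^N ∂*W_i is the total reduced boundary. Then H^{n−1}(Ω ∩ cl(∂*(W)) \ ∂*(W)) = 0, where cl denotes topological closure. -/

import Mathlib

open MeasureTheory Metric Set Filter
open scoped ENNReal symmDiff

noncomputable section

/-- The Lebesgue density of `W` at `x` equals `d`. -/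
def densTo {n : ℕ} (W : Set (EuclideanSpace ℝ (Fin n)))
    (x : EuclideanSpace ℝ (Fin n)) (d : ℝ) : Prop :=
  Tendsto (fun r : ℝ =>
      (volume (W ∩ ball x r)).toReal / (volume (ball x r)).toReal)
    (nhdsWithin 0 (Ioi 0)) (nhds d)

/-- The (measure-theoretic) reduced boundary `∂*W` of `W` inside `Ω`:
points of `Ω` where `W` has neither density `0` nor density `1`. -/
def redBdry {n : ℕ} (Ω W : Set (EuclideanSpace ℝ (Fin n))) :
    Set (EuclideanSpace ℝ (Fin n)) :=
  {x | x ∈ Ω ∧ ¬ densTo W x 0 ∧ ¬ densTo W x 1}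

/-- The perimeter measure `μ_W = |D1_W| = H^{n-1} ⌊ ∂*W`. -/
def perMeas {n : ℕ} (Ω W : Set (EuclideanSpace ℝ (Fin n))) :
    Measure (EuclideanSpace ℝ (Fin n)) :=
  (μH[(n : ℝ) - 1]).restrict (redBdry Ω W)

/-- `W` has locally finite perimeter in `Ω`. -/
def HasLocFinPer {n : ℕ} (Ω W : Set (EuclideanSpace ℝ (Fin n))) : Prop :=
  ∀ K : Set (EuclideanSpace ℝ (Fin n)), IsCompact K → K ⊆ Ω → perMeas Ω W K < ⊤

/-- The class `F_w(Ω)` of weak partitions of `Ω` into `N` Borel sets of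
locally finite perimeter, covering a.e. point of `Ω` exactly once. -/
def FwClass {n : ℕ} (Ω : Set (EuclideanSpace ℝ (Fin n))) {N : ℕ}
    (W : Fin N → Set (EuclideanSpace ℝ (Fin n))) : Prop :=
  (∀ i, W i ⊆ Ω) ∧ (∀ i, MeasurableSet (W i)) ∧ (∀ i, HasLocFinPer Ω (W i)) ∧
    (∀ᵐ x ∂(volume.restrict Ω), ∃! i, x ∈ W i)

/-- The total reduced boundary `∂*(W) = ⋃ i ∂*W_i`. -/
def totBdry {n : ℕ} (Ω : Set (EuclideanSpace ℝ (Fin n))) {N : ℕ}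
    (W : Fin N → Set (EuclideanSpace ℝ (Fin n))) : Set (EuclideanSpace ℝ (Fin n)) :=
  ⋃ i, redBdry Ω (W i)

/-- The weak surface functional `F_w(W) = Σ_i ∫_Ω a dμ_{W_i}`. -/
def Fw {n : ℕ} (Ω : Set (EuclideanSpace ℝ (Fin n)))
    (a : EuclideanSpace ℝ (Fin n) → ℝ) {N : ℕ}
    (W : Fin N → Set (EuclideanSpace ℝ (Fin n))) : ℝ≥0∞ :=
  ∑ i, ∫⁻ x, ENNReal.ofReal (a x) ∂(perMeas Ω (W i))

/-- The `L¹` distance `dist(W,W') = Σ_i |W_i Δ W'_i|` between tuples. -/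
def distW {n N : ℕ} (W W' : Fin N → Set (EuclideanSpace ℝ (Fin n))) : ℝ≥0∞ :=
  ∑ i, volume (W i ∆ W' i)

/-- The weak functional `J_w = F_w + G`, with values in `EReal`
(since `F_w` may be infinite and `G` is real-valued). -/
def Jw {n : ℕ} (Ω : Set (EuclideanSpace ℝ (Fin n)))
    (a : EuclideanSpace ℝ (Fin n) → ℝ) {N : ℕ}
    (G : (Fin N → Set (EuclideanSpace ℝ (Fin n))) → ℝ)
    (W : Fin N → Set (EuclideanSpace ℝ (Fin n))) : EReal :=
  (Fw Ω a W : EReal) + (G W : EReal)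

/-- The Hölder condition on `G`: `|G(W) - G(W')| ≤ C_α dist(W,W')^α`. -/
def HolderG {n : ℕ} (Ω : Set (EuclideanSpace ℝ (Fin n))) {N : ℕ}
    (G : (Fin N → Set (EuclideanSpace ℝ (Fin n))) → ℝ) (α Cα : ℝ) : Prop :=
  ∀ W W' : Fin N → Set (EuclideanSpace ℝ (Fin n)), FwClass Ω W → FwClass Ω W' →
    |G W - G W'| ≤ Cα * (distW W W').toReal ^ α

/-- `W` minimizes `J_w` on `F_w(Ω)`. -/
def MinJw {n : ℕ} (Ω : Set (EuclideanSpace ℝ (Fin n)))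
    (a : EuclideanSpace ℝ (Fin n) → ℝ) {N : ℕ}
    (G : (Fin N → Set (EuclideanSpace ℝ (Fin n))) → ℝ)
    (W : Fin N → Set (EuclideanSpace ℝ (Fin n))) : Prop :=
  FwClass Ω W ∧ ∀ X : Fin N → Set (EuclideanSpace ℝ (Fin n)),
    FwClass Ω X → Jw Ω a G W ≤ Jw Ω a G X



/-! ### Auxiliary lemmas for Statement 8 -/

section Aux

open scoped NNReal


theorem key_null {X : Type*} [MetricSpace X] [MeasurableSpace X] [BorelSpace X]
    (ν : Measure X) [IsFiniteMeasure ν]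
    {d : ℝ} (hd : 0 ≤ d) {c : ℝ≥0∞} (hc0 : c ≠ 0) (hctop : c ≠ ∞)
    {r₀ : ℝ} (hr₀ : 0 < r₀)
    {A : Set X} (hAm : MeasurableSet A)
    (hlow : ∀ x ∈ A, ∀ r : ℝ, 0 < r → r ≤ r₀ → c * (ENNReal.ofReal r) ^ d ≤ ν (ball x r))
    (hA0 : ν A = 0) : μH[d] A = 0 := by
  refine le_antisymm ?_ zero_le
  refine ENNReal.le_of_forall_pos_le_add (fun ε hε _ => ?_)
  rw [zero_add]
  set C₀ : ℝ≥0∞ := (4 : ℝ≥0∞) ^ d * c⁻¹ with hC₀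
  have h4d0 : ((4 : ℝ≥0∞) ^ d) ≠ 0 := (ENNReal.rpow_pos (by norm_num) (by norm_num)).ne'
  have h4dt : ((4 : ℝ≥0∞) ^ d) ≠ ∞ := ENNReal.rpow_ne_top_of_nonneg hd (by norm_num)
  have hC₀0 : C₀ ≠ 0 := by simp [hC₀, h4d0, ENNReal.inv_ne_zero, hctop]
  have hC₀t : C₀ ≠ ∞ := ENNReal.mul_ne_top h4dt (by simp [hc0])
  set ε' : ℝ≥0∞ := (ε : ℝ≥0∞) * C₀⁻¹ with hε'
  have hε'0 : 0 < ε' := ENNReal.mul_pos (by exact_mod_cast hε.ne') (by simp [hC₀t])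
  obtain ⟨U, hAU, hUo, hUε⟩ : ∃ U, A ⊆ U ∧ IsOpen U ∧ ν U < ε' :=
    Set.exists_isOpen_lt_of_lt A ε' (by simpa [hA0] using hε'0)
  set B : ℕ → Set X := fun m => A ∩ {x | ball x (1 / (m + 1)) ⊆ U} with hB
  have hBsub : ∀ m, B m ⊆ A := fun m => inter_subset_left
  have hBmono : Monotone B := by
    intro a b hab
    refine inter_subset_inter le_rfl fun x hx => ?_
    refine (ball_subset_ball (one_div_le_one_div_of_le (by positivity) ?_)).trans hx
    have : (a:ℝ) ≤ b := by exact_mod_cast hab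
    linarith
  have hBunion : ⋃ m, B m = A := by
    refine subset_antisymm (iUnion_subset hBsub) fun x hx => ?_
    obtain ⟨r, hr0, hrU⟩ := Metric.isOpen_iff.1 hUo x (hAU hx)
    obtain ⟨m, hm⟩ := exists_nat_one_div_lt hr0
    exact mem_iUnion.2 ⟨m, hx, (ball_subset_ball hm.le).trans hrU⟩
  have hkey : ∀ m : ℕ, μH[d] (B m) ≤ (ε : ℝ≥0∞) := by
    intro m
    rw [Measure.hausdorffMeasure_apply]
    refine iSup₂_le fun R hR => ?_
    set R' : ℝ≥0∞ := min R 1 with hR'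
    have hR'0 : R' ≠ 0 := (lt_min hR one_pos).ne'
    have hR't : R' ≠ ∞ := by simp [hR']
    have hη : 0 < R'.toReal := ENNReal.toReal_pos hR'0 hR't
    set δ : ℝ := min (min r₀ (1 / (m + 1))) (R'.toReal / 2) with hδ
    have hδ0 : 0 < δ := lt_min (lt_min hr₀ (by positivity)) (by positivity)
    have hδr₀ : δ ≤ r₀ := (min_le_left _ _).trans (min_le_left _ _)
    have hδm : δ ≤ 1 / (m + 1) := (min_le_left _ _).trans (min_le_right _ _)
    have hδR : ENNReal.ofReal (2 * δ) ≤ R := by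
      have h2δ : 2 * δ ≤ R'.toReal := by
        have := min_le_right (min r₀ (1 / (m + 1))) (R'.toReal / 2)
        have : δ ≤ R'.toReal / 2 := this
        linarith
      calc ENNReal.ofReal (2 * δ) ≤ ENNReal.ofReal R'.toReal := ENNReal.ofReal_le_ofReal h2δ
        _ = R' := ENNReal.ofReal_toReal hR't
        _ ≤ R := min_le_left _ _
    obtain ⟨T, hT⟩ := zorn_subset {T : Set X | T ⊆ B m ∧ T.Pairwise fun x y => δ ≤ dist x y}
      (by
        intro ch hch hchain
        refine ⟨⋃₀ ch, ⟨sUnion_subset fun s hs => (hch hs).1, ?_⟩,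
          fun s hs => subset_sUnion_of_mem hs⟩
        intro x hx y hy hxy
        obtain ⟨s, hs, hxs⟩ := hx
        obtain ⟨t, ht, hyt⟩ := hy
        rcases hchain.total hs ht with h | h
        · exact (hch ht).2 (h hxs) hyt hxy
        · exact (hch hs).2 hxs (h hyt) hxy)
    obtain ⟨⟨hTB, hTsep⟩, hTmax⟩ := hT
    have hcov : ∀ a ∈ B m, ∃ x ∈ T, dist a x < δ := by
      intro a ha
      by_contra h
      push_neg at h
      have haT : a ∉ T := by
        intro haT
        have := h a haT
        simp only [dist_self] at this
        exact absurd this (by linarith)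
      have hmem : insert a T ∈ {T : Set X | T ⊆ B m ∧ T.Pairwise fun x y => δ ≤ dist x y} :=
        ⟨insert_subset ha hTB, hTsep.insert fun y hy _ => ⟨h y hy, by rw [dist_comm]; exact h y hy⟩⟩
      exact haT (hTmax hmem (subset_insert a T) (mem_insert a T))
    have hball_lb : ∀ x ∈ T, c * (ENNReal.ofReal (δ / 2)) ^ d ≤ ν (ball x (δ / 2)) :=
      fun x hx => hlow x (hBsub m (hTB hx)) (δ / 2) (by positivity) (by linarith)
    have hballU : ∀ x ∈ T, ball x (δ / 2) ⊆ U :=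
      fun x hx => (ball_subset_ball (by linarith [one_div_pos.2 (by positivity : (0:ℝ) < (m:ℝ)+1)]
        )).trans (hTB hx).2
    set q : ℝ≥0∞ := c * (ENNReal.ofReal (δ / 2)) ^ d with hq
    have hP0 : (ENNReal.ofReal (δ / 2)) ^ d ≠ 0 :=
      (ENNReal.rpow_pos (ENNReal.ofReal_pos.2 (by positivity)) ENNReal.ofReal_ne_top).ne'
    have hPt : (ENNReal.ofReal (δ / 2)) ^ d ≠ ∞ :=
      ENNReal.rpow_ne_top_of_nonneg hd ENNReal.ofReal_ne_top
    have hq0 : q ≠ 0 := by simp [hq, hc0, hP0]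
    have hqt : q ≠ ∞ := ENNReal.mul_ne_top hctop hPt
    have hFin : ∀ F : Finset X, ↑F ⊆ T → (F.card : ℝ≥0∞) * q ≤ ν U := by
      intro F hF
      have hdisj : (↑F : Set X).PairwiseDisjoint fun x => ball x (δ / 2) := by
        intro x hx y hy hxy
        have hsep := hTsep (hF hx) (hF hy) hxy
        exact ball_disjoint_ball (by linarith)
      calc (F.card : ℝ≥0∞) * q = ∑ _x ∈ F, q := by rw [Finset.sum_const, nsmul_eq_mul]
        _ ≤ ∑ x ∈ F, ν (ball x (δ / 2)) := Finset.sum_le_sum fun x hx => hball_lb x (hF hx)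
        _ = ν (⋃ x ∈ F, ball x (δ / 2)) :=
            (measure_biUnion_finset hdisj fun x _ => measurableSet_ball).symm
        _ ≤ ν U := measure_mono (iUnion₂_subset fun x hx => hballU x (hF hx))
    have hTfin : T.Finite := by
      by_contra hinf
      obtain ⟨N, hN⟩ := ENNReal.exists_nat_gt
        (ENNReal.mul_ne_top (measure_ne_top ν U) (ENNReal.inv_ne_top.2 hq0))
      obtain ⟨s, hsT, hsfin, hscard⟩ := Set.Infinite.exists_subset_ncard_eq hinf (N + 1)
      have hcard : hsfin.toFinset.card = N + 1 := by
        rw [← hscard, Set.ncard_eq_toFinset_card s hsfin]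
      have hle : ((N:ℝ≥0∞) + 1) * q ≤ ν U := by
        have := hFin hsfin.toFinset (by simpa using hsT)
        rwa [hcard, Nat.cast_add, Nat.cast_one] at this
      have : ((N:ℝ≥0∞) + 1) ≤ ν U * q⁻¹ := by
        rw [← ENNReal.le_div_iff_mul_le (Or.inl hq0) (Or.inl hqt)] at hle
        rwa [ENNReal.div_eq_inv_mul, mul_comm] at hle
      exact absurd (this.trans hN.le) (not_le.2 (ENNReal.lt_add_right (ENNReal.natCast_ne_top N) one_ne_zero))
    -- enumerate T and build the cover
    set F₀ : Finset X := hTfin.toFinset with hF₀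
    set L : ℕ := F₀.card with hL
    have hLq : (L : ℝ≥0∞) * q ≤ ν U := hFin F₀ (by simp [hF₀])
    set l : List X := F₀.toList with hl
    have hlen : l.length = L := Finset.length_toList F₀
    set t : ℕ → Set X := fun i => if h : i < l.length then ball (l.get ⟨i, h⟩) δ else ∅ with ht
    have hcover : B m ⊆ ⋃ i, t i := by
      intro a ha
      obtain ⟨x, hxT, hax⟩ := hcov a ha
      have hxl : x ∈ l := by rw [hl, Finset.mem_toList]; simpa [hF₀] using hxT
      obtain ⟨i, hi⟩ := List.mem_iff_get.1 hxl
      refine mem_iUnion.2 ⟨i, ?_⟩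
      simp only [ht]
      rw [dif_pos i.isLt]
      rw [hi]
      exact mem_ball.2 hax
    have hdiam_ball : ∀ (z : X), EMetric.diam (ball z δ) ≤ ENNReal.ofReal (2 * δ) := by
      intro z
      rw [← Metric.emetric_ball]
      refine le_trans EMetric.diam_ball ?_
      rw [ENNReal.ofReal_mul (by norm_num : (0:ℝ) ≤ 2)]
      simp
    have hdiam : ∀ i, EMetric.diam (t i) ≤ R := by
      intro i
      simp only [ht]
      split
      · exact (hdiam_ball _).trans hδR
      · exact (EMetric.diam_empty (X := X)).le.trans zero_le
    set P : ℝ≥0∞ := (ENNReal.ofReal (δ / 2)) ^ d with hPdef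
    have hsum : (∑' i, ⨆ _ : (t i).Nonempty, EMetric.diam (t i) ^ d)
        ≤ (L : ℝ≥0∞) * (ENNReal.ofReal (2 * δ)) ^ d := by
      have hzero : ∀ i ∉ Finset.range l.length,
          (⨆ _ : (t i).Nonempty, EMetric.diam (t i) ^ d) = 0 := by
        intro i hi
        simp only [ht]
        rw [dif_neg (by simpa using hi)]
        simp
      rw [tsum_eq_sum hzero]
      have hterm : ∀ i ∈ Finset.range l.length,
          (⨆ _ : (t i).Nonempty, EMetric.diam (t i) ^ d) ≤ (ENNReal.ofReal (2 * δ)) ^ d := by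
        intro i hi
        refine iSup_le fun _ => ?_
        refine ENNReal.rpow_le_rpow ?_ hd
        simp only [ht]
        rw [dif_pos (Finset.mem_range.1 hi)]
        exact hdiam_ball _
      calc (∑ i ∈ Finset.range l.length, ⨆ _ : (t i).Nonempty, EMetric.diam (t i) ^ d)
          ≤ ∑ _i ∈ Finset.range l.length, (ENNReal.ofReal (2 * δ)) ^ d :=
            Finset.sum_le_sum hterm
        _ = (L : ℝ≥0∞) * (ENNReal.ofReal (2 * δ)) ^ d := by
            rw [Finset.sum_const, Finset.card_range, hlen, nsmul_eq_mul]
    have harith : (L : ℝ≥0∞) * (ENNReal.ofReal (2 * δ)) ^ d ≤ (ε : ℝ≥0∞) := by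
      have h2δ : (ENNReal.ofReal (2 * δ)) ^ d = (4:ℝ≥0∞) ^ d * P := by
        rw [hPdef, ← ENNReal.mul_rpow_of_nonneg _ _ hd]
        congr 1
        rw [show (2 * δ) = 4 * (δ / 2) by ring, ENNReal.ofReal_mul (by norm_num : (0:ℝ) ≤ 4)]
        congr 1
        norm_num
      have hLP : (L : ℝ≥0∞) * P ≤ c⁻¹ * ε' := by
        have hcLP : c * ((L : ℝ≥0∞) * P) ≤ ε' := by
          calc c * ((L : ℝ≥0∞) * P) = (L : ℝ≥0∞) * (c * P) := by ring
            _ = (L : ℝ≥0∞) * q := by rw [hq]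
            _ ≤ ν U := hLq
            _ ≤ ε' := hUε.le
        calc (L : ℝ≥0∞) * P = c⁻¹ * (c * ((L : ℝ≥0∞) * P)) := by
              rw [← mul_assoc, ENNReal.inv_mul_cancel hc0 hctop, one_mul]
          _ ≤ c⁻¹ * ε' := mul_le_mul_right hcLP _
      calc (L : ℝ≥0∞) * (ENNReal.ofReal (2 * δ)) ^ d = (4:ℝ≥0∞) ^ d * ((L : ℝ≥0∞) * P) := by
            rw [h2δ]; ring
        _ ≤ (4:ℝ≥0∞) ^ d * (c⁻¹ * ε') := mul_le_mul_right hLP _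
        _ = C₀ * ε' := by rw [hC₀]; ring
        _ = (ε : ℝ≥0∞) * (C₀ * C₀⁻¹) := by rw [hε']; ring
        _ = (ε : ℝ≥0∞) := by rw [ENNReal.mul_inv_cancel hC₀0 hC₀t, mul_one]
    refine le_trans (iInf_le_of_le t (iInf_le_of_le hcover (iInf_le_of_le hdiam le_rfl))) ?_
    exact hsum.trans harith
  calc μH[d] A = ⨆ m, μH[d] (B m) := by rw [← hBunion]; exact hBmono.directed_le.measure_iUnion
    _ ≤ (ε : ℝ≥0∞) := iSup_le hkey

variable {n : ℕ}

lemma volBall_toReal (hn : 0 < n) (x : EuclideanSpace ℝ (Fin n)) (r : ℝ) :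
    (volume (ball x r)).toReal
      = max r 0 ^ n * (Real.sqrt Real.pi ^ n / Real.Gamma (n / 2 + 1)) := by
  have hC : (0:ℝ) ≤ Real.sqrt Real.pi ^ n / Real.Gamma (n / 2 + 1) := by
    have h1 : (0:ℝ) < Real.Gamma (n / 2 + 1) := Real.Gamma_pos_of_pos (by positivity)
    positivity
  have : Nonempty (Fin n) := ⟨⟨0, hn⟩⟩
  rw [EuclideanSpace.volume_ball]
  simp only [Fintype.card_fin]
  rw [ENNReal.toReal_mul, ENNReal.toReal_pow, ENNReal.toReal_ofReal hC,
    ENNReal.toReal_ofReal']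

lemma volBall_pos_toReal (x : EuclideanSpace ℝ (Fin n)) {r : ℝ} (hr : 0 < r) :
    0 < (volume (ball x r)).toReal :=
  ENNReal.toReal_pos (measure_ball_pos volume x hr).ne' (measure_ball_lt_top).ne

lemma continuous_volBall_toReal (hn : 0 < n) (x : EuclideanSpace ℝ (Fin n)) :
    Continuous fun r : ℝ => (volume (ball x r)).toReal := by
  simp only [volBall_toReal hn]
  fun_prop

lemma continuous_volWB_toReal (hn : 0 < n) (W : Set (EuclideanSpace ℝ (Fin n)))
    (x : EuclideanSpace ℝ (Fin n)) :
    Continuous fun r : ℝ => (volume (W ∩ ball x r)).toReal := by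
  set f : ℝ → ℝ := fun r => (volume (W ∩ ball x r)).toReal with hf
  set g : ℝ → ℝ := fun r => (volume (ball x r)).toReal with hg
  have key : ∀ a b : ℝ, a ≤ b → f a ≤ f b ∧ f b - f a ≤ g b - g a := by
    intro a b hab
    have hsub : ball x a ⊆ ball x b := ball_subset_ball hab
    have hfin : ∀ s : Set _, s ⊆ ball x b → volume s < ∞ :=
      fun s hs => (measure_mono hs).trans_lt measure_ball_lt_top
    have h1 : volume (W ∩ ball x b) ≤ volume (W ∩ ball x a) + volume (ball x b \ ball x a) := by
      refine le_trans (measure_mono ?_) (measure_union_le _ _)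
      intro z hz
      by_cases hza : z ∈ ball x a
      · exact Or.inl ⟨hz.1, hza⟩
      · exact Or.inr ⟨hz.2, hza⟩
    have hdiff : volume (ball x b \ ball x a) = volume (ball x b) - volume (ball x a) :=
      measure_diff hsub measurableSet_ball.nullMeasurableSet measure_ball_lt_top.ne
    constructor
    · refine ENNReal.toReal_mono (hfin _ inter_subset_right).ne
        (measure_mono (inter_subset_inter_right _ hsub))
    · have hWa : volume (W ∩ ball x a) ≠ ∞ := (hfin _ (inter_subset_right.trans hsub)).ne
      have hd' : volume (ball x b) - volume (ball x a) ≠ ∞ := by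
        rw [← hdiff]; exact (hfin _ diff_subset).ne
      have h2 : f b ≤ (volume (W ∩ ball x a) + (volume (ball x b) - volume (ball x a))).toReal := by
        refine ENNReal.toReal_mono (ENNReal.add_ne_top.2 ⟨hWa, hd'⟩) ?_
        rw [← hdiff]; exact h1
      rw [ENNReal.toReal_add hWa hd'] at h2
      have h3 : (volume (ball x b) - volume (ball x a)).toReal = g b - g a :=
        ENNReal.toReal_sub_of_le (measure_mono hsub) measure_ball_lt_top.ne
      have h4 : f a = (volume (W ∩ ball x a)).toReal := rfl
      linarith [h2, h3]
  have hbound : ∀ a b : ℝ, |f b - f a| ≤ |g b - g a| := by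
    intro a b
    rcases le_total a b with h | h
    · obtain ⟨h1, h2⟩ := key a b h
      have hgm : g a ≤ g b := by
        exact ENNReal.toReal_mono measure_ball_lt_top.ne (measure_mono (ball_subset_ball h))
      rw [abs_of_nonneg (by linarith), abs_of_nonneg (by linarith)]
      exact h2
    · obtain ⟨h1, h2⟩ := key b a h
      have hgm : g b ≤ g a := by
        exact ENNReal.toReal_mono measure_ball_lt_top.ne (measure_mono (ball_subset_ball h))
      rw [abs_of_nonpos (by linarith), abs_of_nonpos (by linarith)]
      linarith
  rw [Metric.continuous_iff]
  intro b ε hε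
  obtain ⟨δ, hδ0, hδ⟩ := Metric.continuous_iff.1 (continuous_volBall_toReal hn x) b ε hε
  refine ⟨δ, hδ0, fun a ha => ?_⟩
  have h1 := hδ a ha
  rw [Real.dist_eq] at h1 ⊢
  exact lt_of_le_of_lt (hbound b a) h1

lemma measurable_volWB (W : Set (EuclideanSpace ℝ (Fin n))) (hW : MeasurableSet W) (q : ℝ) :
    Measurable fun x : EuclideanSpace ℝ (Fin n) => volume (W ∩ ball x q) := by
  have hs : MeasurableSet {p : EuclideanSpace ℝ (Fin n) × EuclideanSpace ℝ (Fin n) |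
      p.2 ∈ W ∧ dist p.2 p.1 < q} := by
    refine MeasurableSet.inter (measurable_snd hW) ?_
    exact measurableSet_lt (measurable_snd.dist measurable_fst) measurable_const
  have h := measurable_measure_prodMk_left (ν := (volume : Measure (EuclideanSpace ℝ (Fin n)))) hs
  convert h using 2 with x
  rfl


lemma densTo_iff (hn : 0 < n) (W : Set (EuclideanSpace ℝ (Fin n)))
    (x : EuclideanSpace ℝ (Fin n)) (c : ℝ) :
    densTo W x c ↔ ∀ k : ℕ, ∃ m : ℕ, ∀ q : ℚ, 0 < (q:ℝ) → (q:ℝ) < 1/(m+1) →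
      |(volume (W ∩ ball x (q:ℝ))).toReal / (volume (ball x (q:ℝ))).toReal - c| ≤ 1/(k+1) := by
  constructor
  · intro h k
    have hk : (0:ℝ) < 1/(k+1) := by positivity
    unfold densTo at h
    obtain ⟨δ, hδ0, hδ⟩ := Metric.tendsto_nhdsWithin_nhds.1 h (1/(k+1)) hk
    obtain ⟨m, hm⟩ := exists_nat_one_div_lt hδ0
    refine ⟨m, fun q hq0 hqm => ?_⟩
    have h2 := hδ (mem_Ioi.2 hq0)
      (by rw [Real.dist_eq, sub_zero, abs_of_pos hq0]; linarith)
    rw [Real.dist_eq] at h2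
    exact h2.le
  · intro h
    unfold densTo
    rw [Metric.tendsto_nhdsWithin_nhds]
    intro ε hε
    obtain ⟨k, hk⟩ := exists_nat_one_div_lt hε
    obtain ⟨m, hm⟩ := h k
    refine ⟨1/(m+1), by positivity, fun {r} hr hrδ => ?_⟩
    rw [Real.dist_eq, sub_zero] at hrδ
    have hr0 : (0:ℝ) < r := hr
    rw [abs_of_pos hr0] at hrδ
    rw [Real.dist_eq]
    set φ : ℝ → ℝ := fun s =>
      |(volume (W ∩ ball x s)).toReal / (volume (ball x s)).toReal - c| with hφ
    have hcont : ContinuousAt φ r := by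
      refine ContinuousAt.abs (ContinuousAt.sub ?_ continuousAt_const)
      exact ContinuousAt.div ((continuous_volWB_toReal hn W x).continuousAt)
        ((continuous_volBall_toReal hn x).continuousAt) (volBall_pos_toReal x hr0).ne'
    set Q : Set ℝ := Ioo (0:ℝ) (1/(m+1)) ∩ Set.range ((↑) : ℚ → ℝ) with hQ
    have hclos : r ∈ closure Q :=
      Dense.open_subset_closure_inter (Rat.denseRange_cast (𝕜 := ℝ)) isOpen_Ioo ⟨hr0, hrδ⟩
    have hne : (nhdsWithin r Q).NeBot := mem_closure_iff_nhdsWithin_neBot.1 hclos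
    have hlim : Tendsto φ (nhdsWithin r Q) (nhds (φ r)) :=
      hcont.continuousWithinAt.tendsto
    have hub : ∀ᶠ s in nhdsWithin r Q, φ s ≤ 1/(k+1) := by
      filter_upwards [self_mem_nhdsWithin] with s hs
      obtain ⟨⟨hs0, hsm⟩, ⟨q, rfl⟩⟩ := hs
      exact hm q hs0 hsm
    exact lt_of_le_of_lt (le_of_tendsto hlim hub) hk

lemma measurableSet_densTo (hn : 0 < n) (W : Set (EuclideanSpace ℝ (Fin n)))
    (hW : MeasurableSet W) (c : ℝ) :
    MeasurableSet {x | densTo W x c} := by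
  have hset : {x | densTo W x c} =
      ⋂ k : ℕ, ⋃ m : ℕ, ⋂ q : {q : ℚ // 0 < (q:ℝ) ∧ (q:ℝ) < 1/(m+1)},
        {x | |(volume (W ∩ ball x (q:ℝ))).toReal / (volume (ball x (q:ℝ))).toReal - c|
          ≤ 1/(k+1)} := by
    ext x
    simp only [mem_setOf_eq, mem_iInter, mem_iUnion, Subtype.forall]
    rw [densTo_iff hn]
    constructor
    · intro h k; obtain ⟨m, hm⟩ := h k; exact ⟨m, fun q hq => hm q hq.1 hq.2⟩
    · intro h k; obtain ⟨m, hm⟩ := h k; exact ⟨m, fun q h1 h2 => hm q ⟨h1, h2⟩⟩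
  rw [hset]
  refine MeasurableSet.iInter fun k => MeasurableSet.iUnion fun m =>
    MeasurableSet.iInter fun q => ?_
  have h1 : Measurable fun x : EuclideanSpace ℝ (Fin n) =>
      |(volume (W ∩ ball x (q:ℝ))).toReal / (volume (ball x (q:ℝ))).toReal - c| := by
    refine Measurable.abs (Measurable.sub ?_ measurable_const)
    refine Measurable.div ((measurable_volWB W hW _).ennreal_toReal) ?_
    simp only [volBall_toReal hn]
    exact measurable_const
  exact measurableSet_le h1 measurable_const


end Aux

/-- Proposition 5.1, (5.5): if the total reduced boundary
`∂*(W)` is locally Ahlfors regular of dimension `n-1` in `Ω`, then its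
closure in `Ω` adds only an `H^{n-1}`-null set. -/
theorem stmt8 {n N : ℕ} (hN : 1 ≤ N) (Ω : Set (EuclideanSpace ℝ (Fin n)))
    (hΩo : IsOpen Ω) (hΩb : Bornology.IsBounded Ω)
    (W : Fin N → Set (EuclideanSpace ℝ (Fin n))) (hW : FwClass Ω W)
    (hAR : ∀ K : Set (EuclideanSpace ℝ (Fin n)), IsCompact K → K ⊆ Ω →
      ∃ CK : ℝ, 1 ≤ CK ∧ ∀ (x : EuclideanSpace ℝ (Fin n)) (r : ℝ),
        x ∈ totBdry Ω W ∩ K → 0 < r → r ≤ 1 →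
          ENNReal.ofReal (CK⁻¹ * r ^ ((n : ℝ) - 1))
              ≤ μH[(n : ℝ) - 1] (totBdry Ω W ∩ ball x r) ∧
            μH[(n : ℝ) - 1] (totBdry Ω W ∩ ball x r)
              ≤ ENNReal.ofReal (CK * r ^ ((n : ℝ) - 1))) :
    μH[(n : ℝ) - 1] ((Ω ∩ closure (totBdry Ω W)) \ totBdry Ω W) = 0 := by
  rcases Nat.eq_zero_or_pos n with hn | hn
  · -- `n = 0`: the space is a subsingleton, so every set is closed
    subst hn
    have hsub : Subsingleton (EuclideanSpace ℝ (Fin 0)) :=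
      ⟨fun a b => PiLp.ext (fun i => i.elim0)⟩
    have hcl : closure (totBdry Ω W) ⊆ totBdry Ω W := by
      intro x hx
      have hne : (totBdry Ω W).Nonempty := by
        by_contra hemp
        rw [not_nonempty_iff_eq_empty] at hemp
        rw [hemp, closure_empty] at hx
        exact hx
      obtain ⟨y, hy⟩ := hne
      rwa [Subsingleton.elim x y]
    have hempty : (Ω ∩ closure (totBdry Ω W)) \ totBdry Ω W = ∅ := by
      rw [diff_eq_empty]
      exact inter_subset_right.trans hcl
    rw [hempty]
    exact measure_empty
  · -- main case `n ≥ 1`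
    set d : ℝ := (n : ℝ) - 1 with hd
    have hd0 : 0 ≤ d := by
      rw [hd, sub_nonneg]
      exact_mod_cast hn
    set E : Set (EuclideanSpace ℝ (Fin n)) := totBdry Ω W with hE
    have hEmeas : MeasurableSet E := by
      refine MeasurableSet.iUnion fun i => ?_
      have hrb : redBdry Ω (W i)
          = Ω ∩ ({x | densTo (W i) x 0}ᶜ ∩ {x | densTo (W i) x 1}ᶜ) := by
        ext x
        simp only [redBdry, mem_setOf_eq, mem_inter_iff, mem_compl_iff]
      rw [hrb]
      exact hΩo.measurableSet.inter
        (((measurableSet_densTo hn _ (hW.2.1 i) 0).compl).inter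
          ((measurableSet_densTo hn _ (hW.2.1 i) 1).compl))
    set S : Set (EuclideanSpace ℝ (Fin n)) := (Ω ∩ closure E) \ E with hS
    have hSmeas : MeasurableSet S :=
      (hΩo.measurableSet.inter isClosed_closure.measurableSet).diff hEmeas
    -- local vanishing around each point of Ω
    have hloc : ∀ x₀ ∈ Ω, ∃ ρ : ℝ, 0 < ρ ∧ μH[d] (S ∩ ball x₀ ρ) = 0 := by
      intro x₀ hx₀
      obtain ⟨ρ', hρ'0, hρ'⟩ := Metric.isOpen_iff.1 hΩo x₀ hx₀
      set ρ : ℝ := min (ρ' / 4) (1 / 3) with hρdef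
      have hρ0 : 0 < ρ := lt_min (by linarith) (by norm_num)
      have hρ3 : ρ ≤ 1 / 3 := min_le_right _ _
      refine ⟨ρ, hρ0, ?_⟩
      have hKsub : closedBall x₀ (3 * ρ) ⊆ Ω := by
        refine (closedBall_subset_ball ?_).trans hρ'
        have h4 : ρ ≤ ρ' / 4 := min_le_left _ _
        linarith
      obtain ⟨CK, hCK1, hCK⟩ := hAR (closedBall x₀ (3 * ρ))
        (isCompact_closedBall _ _) hKsub
      -- Step A: local finiteness of `μH[d]` on `E`
      have hfin : μH[d] (E ∩ closedBall x₀ (2 * ρ)) < ∞ := by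
        obtain ⟨F, hF⟩ := (isCompact_closedBall x₀ (2 * ρ)).elim_finite_subcover
          (fun y : EuclideanSpace ℝ (Fin n) => ball y (ρ / 2)) (fun y => isOpen_ball)
          (fun z hz => mem_iUnion.2 ⟨z, mem_ball_self (by positivity)⟩)
        have hsubc : E ∩ closedBall x₀ (2 * ρ)
            ⊆ ⋃ y ∈ F, (E ∩ closedBall x₀ (2 * ρ)) ∩ ball y (ρ / 2) := by
          intro z hz
          obtain ⟨y, hyF, hzy⟩ := mem_iUnion₂.1 (hF hz.2)
          exact mem_iUnion₂.2 ⟨y, hyF, hz, hzy⟩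
        refine lt_of_le_of_lt ((measure_mono hsubc).trans
          (measure_biUnion_finset_le F _)) ?_
        refine ENNReal.sum_lt_top.2 fun y hy => ?_
        by_cases hne : ((E ∩ closedBall x₀ (2 * ρ)) ∩ ball y (ρ / 2)).Nonempty
        · obtain ⟨e, ⟨⟨heE, hecb⟩, heb⟩⟩ := hne
          rw [mem_closedBall] at hecb
          rw [mem_ball] at heb
          have heK : e ∈ totBdry Ω W ∩ closedBall x₀ (3 * ρ) :=
            ⟨heE, by rw [mem_closedBall]; linarith⟩
          have hsub2 : (E ∩ closedBall x₀ (2 * ρ)) ∩ ball y (ρ / 2)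
              ⊆ totBdry Ω W ∩ ball e ρ := by
            rintro z ⟨⟨hzE, _⟩, hzy⟩
            rw [mem_ball] at hzy
            refine ⟨hzE, ?_⟩
            rw [mem_ball]
            have h1 := dist_triangle z y e
            have h2 : dist y e ≤ dist e y + 0 := by rw [dist_comm]; simp
            linarith
          refine lt_of_le_of_lt (measure_mono hsub2) ?_
          exact lt_of_le_of_lt ((hCK e ρ heK hρ0 (by linarith)).2) ENNReal.ofReal_lt_top
        · rw [not_nonempty_iff_eq_empty] at hne
          rw [hne]
          simp
      -- the restricted measure
      set ν : Measure (EuclideanSpace ℝ (Fin n)) :=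
        μH[d].restrict (E ∩ closedBall x₀ (2 * ρ)) with hν
      haveI : IsFiniteMeasure ν := by
        constructor
        rw [hν, Measure.restrict_apply MeasurableSet.univ, univ_inter]
        exact hfin
      set c : ℝ≥0∞ := ENNReal.ofReal CK⁻¹ * (ENNReal.ofReal (1 / 2)) ^ d with hc
      have hCKpos : (0 : ℝ) < CK⁻¹ := by positivity
      have hc0 : c ≠ 0 := by
        rw [hc]
        exact (ENNReal.mul_pos (ENNReal.ofReal_pos.2 hCKpos).ne'
          (ENNReal.rpow_pos (ENNReal.ofReal_pos.2 (by norm_num)) ENNReal.ofReal_ne_top).ne').ne'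
      have hct : c ≠ ∞ :=
        ENNReal.mul_ne_top ENNReal.ofReal_ne_top
          (ENNReal.rpow_ne_top_of_nonneg hd0 ENNReal.ofReal_ne_top)
      have hA0 : ν (S ∩ ball x₀ ρ) = 0 := by
        rw [hν, Measure.restrict_apply (hSmeas.inter measurableSet_ball)]
        convert measure_empty (μ := μH[d])
        rw [eq_empty_iff_forall_notMem]
        rintro z ⟨⟨hzS, _⟩, hzE, _⟩
        exact hzS.2 hzE
      have hlow : ∀ x ∈ S ∩ ball x₀ ρ, ∀ r : ℝ, 0 < r → r ≤ ρ →
          c * (ENNReal.ofReal r) ^ d ≤ ν (ball x r) := by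
        intro x hx r hr0 hrρ
        obtain ⟨⟨⟨hxΩ, hxcl⟩, hxE⟩, hxb⟩ := hx
        rw [mem_ball] at hxb
        obtain ⟨e, heE, hde⟩ := Metric.mem_closure_iff.1 hxcl (r / 2) (by positivity)
        have heK : e ∈ totBdry Ω W ∩ closedBall x₀ (3 * ρ) := by
          refine ⟨heE, ?_⟩
          rw [mem_closedBall]
          have h1 := dist_triangle e x x₀
          have h2 : dist e x = dist x e := dist_comm e x
          linarith
        have hlb := (hCK e (r / 2) heK (by positivity) (by linarith)).1
        have hsub3 : totBdry Ω W ∩ ball e (r / 2)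
            ⊆ ball x r ∩ (E ∩ closedBall x₀ (2 * ρ)) := by
          rintro z ⟨hzE, hzb⟩
          rw [mem_ball] at hzb
          have h1 := dist_triangle z e x
          have h2 : dist e x = dist x e := dist_comm e x
          refine ⟨?_, hzE, ?_⟩
          · rw [mem_ball]
            linarith
          · rw [mem_closedBall]
            have h3 := dist_triangle z x x₀
            linarith
        have heq : c * (ENNReal.ofReal r) ^ d = ENNReal.ofReal (CK⁻¹ * (r / 2) ^ d) := by
          rw [hc, ENNReal.ofReal_mul hCKpos.le, mul_assoc,
            ← ENNReal.mul_rpow_of_nonneg _ _ hd0, ← ENNReal.ofReal_mul (by norm_num),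
            ENNReal.ofReal_rpow_of_pos (by linarith)]
          norm_num
          ring_nf
        calc c * (ENNReal.ofReal r) ^ d
            = ENNReal.ofReal (CK⁻¹ * (r / 2) ^ d) := heq
          _ ≤ μH[d] (totBdry Ω W ∩ ball e (r / 2)) := hlb
          _ ≤ ν (ball x r) := by
              rw [hν, Measure.restrict_apply measurableSet_ball]
              exact measure_mono hsub3
      exact key_null ν hd0 hc0 hct hρ0 (hSmeas.inter measurableSet_ball) hlow hA0
    -- countable cover of Ω by the good balls
    choose! ρfun hρpos hρnull using hloc
    obtain ⟨T, hTcnt, hTeq⟩ := TopologicalSpace.isOpen_iUnion_countable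
      (fun x : Ω => ball (x : EuclideanSpace ℝ (Fin n)) (ρfun x)) (fun x => isOpen_ball)
    refine measure_mono_null (t := ⋃ x ∈ T, S ∩ ball (x : EuclideanSpace ℝ (Fin n)) (ρfun x))
      ?_ ?_
    · intro z hz
      have hzΩ : z ∈ Ω := hz.1.1
      have hz2 : z ∈ ⋃ x : Ω, ball (x : EuclideanSpace ℝ (Fin n)) (ρfun x) :=
        mem_iUnion.2 ⟨⟨z, hzΩ⟩, mem_ball_self (hρpos z hzΩ)⟩
      rw [← hTeq] at hz2
      obtain ⟨x, hxT, hxb⟩ := mem_iUnion₂.1 hz2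
      exact mem_iUnion₂.2 ⟨x, hxT, hz, hxb⟩
    · exact (measure_biUnion_null_iff hTcnt).2 fun x hx => hρnull x.1 x.2


end
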